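/- arXiv:2105.11299 — 3 statements merged into one kernel-verified Lean document; each statement's English description precedes it below -/
import Mathlib

section
/- Let c_min < c_max be real numbers, let n ≥ m ≥ 1 be integers, and let Z be a multiset of m real numbers with each element in [c_min, c_max]. Then the mapping sending Z to the vector (∑_{z ∈ Z} ((z − c_min)/(c_max − c_min))^k)_{k=1,...,n} ∈ ℝ^n is injective on multisets of cardinality m with elements in [c_min, c_max]: two distinct such multisets are sent to distinct vectors. -/
open Finset Polynomial

/-- Newton's identity for multisets of reals. -/
lemma newton_multiset (S : Multiset ℝ) (k : ℕ) :
    (k : ℝ) * S.esymm k = (-1 : ℝ) ^ (k + 1) *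
      ∑ a ∈ (Finset.HasAntidiagonal.antidiagonal k).filter (fun a => a.1 < k),
        (-1 : ℝ) ^ a.1 * S.esymm a.1 * (S.map (· ^ a.2)).sum := by
  set l := S.toList with hl
  set x : Fin l.length → ℝ := l.get with hx
  have hS : (Finset.univ.val.map x) = S := by
    rw [Fin.univ_val_map, hx, List.ofFn_get, hl, Multiset.coe_toList]
  have hps : ∀ j : ℕ, (S.map (· ^ j)).sum = MvPolynomial.aeval x (MvPolynomial.psum (Fin l.length) ℝ j) := by
    intro j
    rw [MvPolynomial.psum, map_sum, ← hS, Multiset.map_map]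
    simp only [map_pow, MvPolynomial.aeval_X, Function.comp]
    rw [← Finset.sum_map_val]
  have hes : ∀ j : ℕ, S.esymm j = MvPolynomial.aeval x (MvPolynomial.esymm (Fin l.length) ℝ j) := by
    intro j
    rw [MvPolynomial.aeval_esymm_eq_multiset_esymm, hS]
  have h := congrArg (MvPolynomial.aeval x) (MvPolynomial.mul_esymm_eq_sum (Fin l.length) ℝ k)
  simp only [map_mul, map_pow, map_neg, map_one, map_sum, map_natCast] at h
  rw [hes k, h]
  congr 1
  refine Finset.sum_congr rfl fun a _ => ?_
  rw [hes a.1, hps a.2]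

/-- Multisets of reals with the same cardinality `m` and equal power sums for
`k = 1, …, m` are equal. -/
lemma multiset_eq_of_powersums (S₁ S₂ : Multiset ℝ) (m : ℕ)
    (h₁ : Multiset.card S₁ = m) (h₂ : Multiset.card S₂ = m)
    (hp : ∀ k, 1 ≤ k → k ≤ m → (S₁.map (· ^ k)).sum = (S₂.map (· ^ k)).sum) :
    S₁ = S₂ := by
  have he : ∀ k, S₁.esymm k = S₂.esymm k := by
    intro k
    induction k using Nat.strong_induction_on with
    | _ k ih =>
      rcases Nat.eq_zero_or_pos k with rfl | hk
      · simp [Multiset.esymm]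
      rcases le_or_gt k m with hkm | hkm
      · have h1 := newton_multiset S₁ k
        have h2 := newton_multiset S₂ k
        have hsum : ∑ a ∈ (Finset.HasAntidiagonal.antidiagonal k).filter (fun a => a.1 < k),
            (-1 : ℝ) ^ a.1 * S₁.esymm a.1 * (S₁.map (· ^ a.2)).sum =
            ∑ a ∈ (Finset.HasAntidiagonal.antidiagonal k).filter (fun a => a.1 < k),
            (-1 : ℝ) ^ a.1 * S₂.esymm a.1 * (S₂.map (· ^ a.2)).sum := by
          refine Finset.sum_congr rfl fun a ha => ?_
          rw [Finset.mem_filter, Finset.HasAntidiagonal.mem_antidiagonal] at ha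
          have ha1 : a.1 < k := ha.2
          have ha2 : 1 ≤ a.2 := by omega
          have ha2' : a.2 ≤ m := by omega
          rw [ih a.1 ha1, hp a.2 ha2 ha2']
        have : (k : ℝ) * S₁.esymm k = (k : ℝ) * S₂.esymm k := by
          rw [h1, h2, hsum]
        have hk0 : (k : ℝ) ≠ 0 := Nat.cast_ne_zero.mpr (by omega)
        exact mul_left_cancel₀ hk0 this
      · have e1 : S₁.esymm k = 0 := by
          rw [Multiset.esymm, Multiset.powersetCard_eq_empty k (by omega)]
          simp
        have e2 : S₂.esymm k = 0 := by
          rw [Multiset.esymm, Multiset.powersetCard_eq_empty k (by omega)]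
          simp
        rw [e1, e2]
  -- Now the polynomials ∏ (X - z) agree
  have hpoly : (S₁.map fun t => X - C t).prod = (S₂.map fun t => X - C t).prod := by
    apply Polynomial.ext
    intro j
    rcases le_or_gt j m with hj | hj
    · rw [Multiset.prod_X_sub_C_coeff S₁ (by rw [h₁]; exact hj),
          Multiset.prod_X_sub_C_coeff S₂ (by rw [h₂]; exact hj), h₁, h₂, he]
    · have d1 : ((S₁.map fun t => X - C t).prod).natDegree = m := by
        rw [Polynomial.natDegree_multiset_prod_X_sub_C_eq_card, h₁]
      have d2 : ((S₂.map fun t => X - C t).prod).natDegree = m := by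
        rw [Polynomial.natDegree_multiset_prod_X_sub_C_eq_card, h₂]
      rw [Polynomial.coeff_eq_zero_of_natDegree_lt (by rw [d1]; exact hj),
          Polynomial.coeff_eq_zero_of_natDegree_lt (by rw [d2]; exact hj)]
  have := congrArg Polynomial.roots hpoly
  rwa [Polynomial.roots_multiset_prod_X_sub_C, Polynomial.roots_multiset_prod_X_sub_C] at this

/-- The sum-of-power mapping applied to the min–max–scaled multiset:
sends `Z` to `(∑_{z∈Z} ((z - cmin)/(cmax - cmin))^k)_{k=1,…,n}`. -/
noncomputable def scaledSumOfPower (cmin cmax : ℝ) (n : ℕ) (Z : Multiset ℝ) :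
    Fin n → ℝ :=
  fun k => (Z.map (fun z => ((z - cmin) / (cmax - cmin)) ^ (k.val + 1))).sum

/-- Injectivity of the min–max–scaled sum-of-power mapping on multisets of
cardinality `m` with elements in `[cmin, cmax]`, provided `n ≥ m ≥ 1`. -/
theorem scaledSumOfPower_injective (cmin cmax : ℝ) (hc : cmin < cmax)
    (n m : ℕ) (hm : 1 ≤ m) (hnm : m ≤ n)
    (Z₁ Z₂ : Multiset ℝ)
    (hcard₁ : Multiset.card Z₁ = m) (hcard₂ : Multiset.card Z₂ = m)
    (hmem₁ : ∀ z ∈ Z₁, z ∈ Set.Icc cmin cmax)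
    (hmem₂ : ∀ z ∈ Z₂, z ∈ Set.Icc cmin cmax)
    (hne : Z₁ ≠ Z₂) :
    scaledSumOfPower cmin cmax n Z₁ ≠ scaledSumOfPower cmin cmax n Z₂ := by
  intro heq
  set f : ℝ → ℝ := fun z => (z - cmin) / (cmax - cmin) with hf
  have hd : cmax - cmin ≠ 0 := sub_ne_zero.mpr (ne_of_gt hc)
  have hfinj : Function.Injective f := by
    intro a b hab
    simp only [hf, div_left_inj' hd] at hab
    linarith
  set S₁ := Z₁.map f
  set S₂ := Z₂.map f
  have hS : S₁ = S₂ := by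
    apply multiset_eq_of_powersums S₁ S₂ m (by simp [S₁, hcard₁]) (by simp [S₂, hcard₂])
    intro k hk1 hkm
    have hkn : k - 1 < n := by omega
    have := congrFun heq ⟨k - 1, hkn⟩
    simp only [scaledSumOfPower] at this
    have hk' : k - 1 + 1 = k := by omega
    rw [hk'] at this
    simpa only [S₁, S₂, Multiset.map_map, Function.comp] using this
  exact hne (Multiset.map_injective hfinj hS)
end

section
/- Let N be a positive integer. The mapping sending a multiset Z of real numbers with elements in [0,1] and cardinality M satisfying 1 ≤ M ≤ N to the vector (∑_{z ∈ Z} z^1, ..., ∑_{z ∈ Z} z^N, card(Z)) ∈ ℝ^{N+1} is injective: if Z_1 and Z_2 are two such multisets (possibly of different cardinalities) and Z_1 ≠ Z_2, then their images differ. -/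
/-- The extended sum-of-power mapping: sends a multiset `Z` of reals to the
vector `(∑_{z∈Z} z^1, …, ∑_{z∈Z} z^N, card Z) ∈ ℝ^{N+1}`. -/
noncomputable def sumOfPowerWithCard (N : ℕ) (Z : Multiset ℝ) : Fin (N + 1) → ℝ :=
  Fin.snoc (fun k : Fin N => (Z.map (fun z => z ^ (k.val + 1))).sum)
    (Multiset.card Z : ℝ)

open Polynomial Finset

/-- Every multiset of reals is the image of an enumeration of `Fin (card Z)`. -/
lemma exists_enum_aux (Z : Multiset ℝ) :
    ∃ x : Fin (Multiset.card Z) → ℝ, (Finset.univ.val.map x) = Z := by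
  induction Z using Quotient.inductionOn with
  | h l =>
    refine ⟨l.get, ?_⟩
    change Multiset.map l.get (Finset.univ.val : Multiset (Fin l.length)) = (l : Multiset ℝ)
    have : (Finset.univ.val : Multiset (Fin l.length)) = (List.finRange l.length : Multiset _) := rfl
    rw [this]
    simp only [Multiset.map_coe]
    rw [List.map_get_finRange l]

/-- Newton's identity for multisets of reals. -/
lemma newton_multiset_aux (Z : Multiset ℝ) (k : ℕ) :
    (k : ℝ) * Z.esymm k = (-1) ^ (k + 1) *
      ∑ a ∈ Finset.HasAntidiagonal.antidiagonal k with a.1 < k,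
        (-1 : ℝ) ^ a.1 * Z.esymm a.1 * (Z.map (fun z => z ^ a.2)).sum := by
  obtain ⟨x, hx⟩ := exists_enum_aux Z
  have h := congrArg (MvPolynomial.aeval x)
    (MvPolynomial.mul_esymm_eq_sum (Fin (Multiset.card Z)) ℝ k)
  simp only [map_mul, map_sum, map_pow, map_neg, map_one, map_natCast,
    MvPolynomial.aeval_esymm_eq_multiset_esymm, hx] at h
  rw [h]
  congr 1
  refine Finset.sum_congr rfl fun a _ => ?_
  congr 1
  simp only [MvPolynomial.psum, map_sum, map_pow, MvPolynomial.aeval_X]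
  conv_rhs => rw [← hx]
  simp [Multiset.map_map, Function.comp, Finset.sum]
  rfl

/-- Equal power sums (up to N) and equal cardinality `≤ N` force equal `esymm`s. -/
lemma esymm_eq_of_psum_eq_aux (N : ℕ) (Z₁ Z₂ : Multiset ℝ)
    (hcard : Multiset.card Z₁ = Multiset.card Z₂) (hle : Multiset.card Z₁ ≤ N)
    (hp : ∀ j, 1 ≤ j → j ≤ N →
      (Z₁.map (fun z => z ^ j)).sum = (Z₂.map (fun z => z ^ j)).sum) :
    ∀ k, k ≤ Multiset.card Z₁ → Z₁.esymm k = Z₂.esymm k := by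
  intro k
  induction k using Nat.strong_induction_on with
  | _ k ih =>
    intro hk
    rcases Nat.eq_zero_or_pos k with rfl | hkpos
    · simp [Multiset.esymm]
    · have hk' : (k : ℝ) ≠ 0 := Nat.cast_ne_zero.mpr hkpos.ne'
      have h1 := newton_multiset_aux Z₁ k
      have h2 := newton_multiset_aux Z₂ k
      have hsum : ∑ a ∈ Finset.HasAntidiagonal.antidiagonal k with a.1 < k,
          (-1 : ℝ) ^ a.1 * Z₁.esymm a.1 * (Z₁.map (fun z => z ^ a.2)).sum =
          ∑ a ∈ Finset.HasAntidiagonal.antidiagonal k with a.1 < k,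
          (-1 : ℝ) ^ a.1 * Z₂.esymm a.1 * (Z₂.map (fun z => z ^ a.2)).sum := by
        refine Finset.sum_congr rfl fun a ha => ?_
        simp only [Finset.mem_filter, Finset.HasAntidiagonal.mem_antidiagonal] at ha
        have he := ih a.1 ha.2 (le_trans (le_of_lt ha.2) hk)
        have hj : a.2 ≥ 1 := by omega
        have hjN : a.2 ≤ N := by omega
        rw [he, hp a.2 hj hjN]
      have : (k : ℝ) * Z₁.esymm k = (k : ℝ) * Z₂.esymm k := by rw [h1, h2, hsum]
      exact mul_left_cancel₀ hk' this

/-- Two multisets of reals with the same cardinality and the same elementary symmetric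
functions are equal. -/
lemma multiset_eq_of_esymm_eq_aux (Z₁ Z₂ : Multiset ℝ)
    (hcard : Multiset.card Z₁ = Multiset.card Z₂)
    (he : ∀ k, k ≤ Multiset.card Z₁ → Z₁.esymm k = Z₂.esymm k) : Z₁ = Z₂ := by
  have hP : (Z₁.map (fun z => X - C z)).prod = (Z₂.map (fun z => X - C z)).prod := by
    ext n
    rcases le_or_gt n (Multiset.card Z₁) with hn | hn
    · rw [Multiset.prod_X_sub_C_coeff _ hn, Multiset.prod_X_sub_C_coeff _ (hcard ▸ hn), ← hcard,
        he _ (Nat.sub_le _ _)]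
    · rw [Polynomial.coeff_eq_zero_of_natDegree_lt, Polynomial.coeff_eq_zero_of_natDegree_lt]
      · rw [Polynomial.natDegree_multiset_prod_X_sub_C_eq_card, ← hcard]; exact hn
      · rw [Polynomial.natDegree_multiset_prod_X_sub_C_eq_card]; exact hn
  have := congrArg Polynomial.roots hP
  rwa [Polynomial.roots_multiset_prod_X_sub_C, Polynomial.roots_multiset_prod_X_sub_C] at this

/-- Injectivity of the sum-of-power mapping extended with the cardinality
coordinate, on multisets with elements in `[0,1]` and cardinality `M` with
`1 ≤ M ≤ N` (possibly different cardinalities for the two multisets). -/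
theorem sumOfPowerWithCard_injective (N : ℕ) (hN : 0 < N)
    (Z₁ Z₂ : Multiset ℝ)
    (hcard₁ : 1 ≤ Multiset.card Z₁ ∧ Multiset.card Z₁ ≤ N)
    (hcard₂ : 1 ≤ Multiset.card Z₂ ∧ Multiset.card Z₂ ≤ N)
    (hmem₁ : ∀ z ∈ Z₁, z ∈ Set.Icc (0 : ℝ) 1)
    (hmem₂ : ∀ z ∈ Z₂, z ∈ Set.Icc (0 : ℝ) 1)
    (hne : Z₁ ≠ Z₂) :
    sumOfPowerWithCard N Z₁ ≠ sumOfPowerWithCard N Z₂ := by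
  intro h
  apply hne
  have hcard : Multiset.card Z₁ = Multiset.card Z₂ := by
    have := congrFun h (Fin.last N)
    simp only [sumOfPowerWithCard, Fin.snoc_last] at this
    exact_mod_cast this
  have hp : ∀ j, 1 ≤ j → j ≤ N →
      (Z₁.map (fun z => z ^ j)).sum = (Z₂.map (fun z => z ^ j)).sum := by
    intro j hj1 hjN
    have := congrFun h (Fin.castSucc ⟨j - 1, by omega⟩)
    simp only [sumOfPowerWithCard, Fin.snoc_castSucc] at this
    have hj : j - 1 + 1 = j := by omega
    rwa [hj] at this
  exact multiset_eq_of_esymm_eq_aux Z₁ Z₂ hcard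
    (esymm_eq_of_psum_eq_aux N Z₁ Z₂ hcard hcard₁.2 hp)
end

section
/- Let N and d_2 be positive integers and c_min < c_max real numbers. There exists a function h : ℝ → ℝ^{N+1} such that the mapping U sending a pair (Z, x_else), where Z is a multiset of real numbers with elements in [c_min, c_max] and cardinality M with 1 ≤ M ≤ N and x_else ∈ ℝ^{d_2}, to the concatenated vector (∑_{z ∈ Z} h(z), x_else) ∈ ℝ^{(N+1)+d_2}, is injective: if (Z_1, x_else,1) ≠ (Z_2, x_else,2) then U(Z_1, x_else,1) ≠ U(Z_2, x_else,2). -/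
open Finset MvPolynomial in
private lemma newton_eval (M : ℕ) (S : Multiset ℝ) (f : Fin M → ℝ)
    (hf : Finset.univ.val.map f = S) (k : ℕ) :
    (k : ℝ) * S.esymm k = (-1) ^ (k + 1) *
      ∑ a ∈ (Finset.HasAntidiagonal.antidiagonal k).filter (fun a => a.1 < k),
        (-1 : ℝ) ^ a.1 * S.esymm a.1 * (S.map (· ^ a.2)).sum := by
  have hps : ∀ n : ℕ, (S.map (· ^ n)).sum = ∑ i, f i ^ n := by
    intro n
    rw [← hf, Multiset.map_map]
    rfl
  have h := congrArg (aeval f) (MvPolynomial.mul_esymm_eq_sum (Fin M) ℝ k)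
  simp only [map_mul, map_sum, map_pow, map_natCast, map_neg, map_one,
    aeval_esymm_eq_multiset_esymm, hf, MvPolynomial.psum, MvPolynomial.aeval_X] at h
  simp only [hps]
  convert h using 4

private lemma multiset_eq_of_psum_eq (M : ℕ) (S T : Multiset ℝ)
    (hS : Multiset.card S = M) (hT : Multiset.card T = M)
    (hp : ∀ k : ℕ, 1 ≤ k → k ≤ M → (S.map (· ^ k)).sum = (T.map (· ^ k)).sum) :
    S = T := by
  classical
  obtain ⟨ls, rfl⟩ := Quotient.exists_rep S
  obtain ⟨lt, rfl⟩ := Quotient.exists_rep T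
  have hlS : ls.length = M := hS
  have hlT : lt.length = M := hT
  set S : Multiset ℝ := ⟦ls⟧
  set T : Multiset ℝ := ⟦lt⟧
  have hfS : Finset.univ.val.map (fun i : Fin M => ls.get (Fin.cast hlS.symm i)) = S := by
    rw [Fin.univ_val_map]
    show ((List.ofFn _ : List ℝ) : Multiset ℝ) = _
    congr 1
    apply List.ext_getElem
    · simp [hlS]
    · intro i h1 h2
      simp
  have hfT : Finset.univ.val.map (fun i : Fin M => lt.get (Fin.cast hlT.symm i)) = T := by
    rw [Fin.univ_val_map]
    show ((List.ofFn _ : List ℝ) : Multiset ℝ) = _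
    congr 1
    apply List.ext_getElem
    · simp [hlT]
    · intro i h1 h2
      simp
  -- esymm equality
  have hesymm : ∀ k, k ≤ M → S.esymm k = T.esymm k := by
    intro k
    induction k using Nat.strong_induction_on with
    | _ k ih =>
      intro hkM
      rcases Nat.eq_zero_or_pos k with rfl | hk
      · simp [Multiset.esymm]
      · have h1 := newton_eval M S _ hfS k
        have h2 := newton_eval M T _ hfT k
        have hsum : ∑ a ∈ (Finset.HasAntidiagonal.antidiagonal k).filter (fun a => a.1 < k),
              (-1 : ℝ) ^ a.1 * S.esymm a.1 * (S.map (· ^ a.2)).sum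
            = ∑ a ∈ (Finset.HasAntidiagonal.antidiagonal k).filter (fun a => a.1 < k),
              (-1 : ℝ) ^ a.1 * T.esymm a.1 * (T.map (· ^ a.2)).sum := by
          refine Finset.sum_congr rfl fun a ha => ?_
          have ha' : a.1 + a.2 = k ∧ a.1 < k := by
            simpa [Finset.mem_filter, Finset.mem_antidiagonal] using ha
          have h2k : 1 ≤ a.2 := by omega
          have h2M : a.2 ≤ M := by omega
          rw [ih a.1 ha'.2 (by omega), hp a.2 h2k h2M]
        have hkne : (k : ℝ) ≠ 0 := Nat.cast_ne_zero.mpr hk.ne'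
        have : (k : ℝ) * S.esymm k = (k : ℝ) * T.esymm k := by
          rw [h1, h2, hsum]
        exact mul_left_cancel₀ hkne this
  -- polynomial equality
  have hpoly : (S.map fun a => Polynomial.X - Polynomial.C a).prod
      = (T.map fun a => Polynomial.X - Polynomial.C a).prod := by
    apply Polynomial.ext
    intro k
    rcases le_or_gt k M with hkM | hkM
    · rw [Multiset.prod_X_sub_C_coeff S (hS ▸ hkM), Multiset.prod_X_sub_C_coeff T (hT ▸ hkM),
        hS, hT, hesymm (M - k) (Nat.sub_le _ _)]
    · rw [Polynomial.coeff_eq_zero_of_natDegree_lt, Polynomial.coeff_eq_zero_of_natDegree_lt]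
      · rw [Polynomial.natDegree_multiset_prod_X_sub_C_eq_card, hT]; exact hkM
      · rw [Polynomial.natDegree_multiset_prod_X_sub_C_eq_card, hS]; exact hkM
  have := congrArg Polynomial.roots hpoly
  rwa [Polynomial.roots_multiset_prod_X_sub_C, Polynomial.roots_multiset_prod_X_sub_C] at this

/-- Injectivity of the encoding-sum-and-concatenation (ESC) representation:
there is a feature map `h : ℝ → ℝ^{N+1}` such that the mapping
`U(Z, x_else) = (∑_{z∈Z} h(z), x_else) ∈ ℝ^{(N+1)+d₂}` is injective on pairs
`(Z, x_else)` where `Z` is a multiset with elements in `[cmin, cmax]` and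
cardinality `M` with `1 ≤ M ≤ N`, and `x_else ∈ ℝ^{d₂}`. -/
theorem exists_ESC_injective (N d₂ : ℕ) (hN : 0 < N) (hd₂ : 0 < d₂)
    (cmin cmax : ℝ) (hc : cmin < cmax) :
    ∃ h : ℝ → (Fin (N + 1) → ℝ),
      ∀ (Z₁ Z₂ : Multiset ℝ) (xelse₁ xelse₂ : Fin d₂ → ℝ),
        (∀ z ∈ Z₁, z ∈ Set.Icc cmin cmax) →
        (∀ z ∈ Z₂, z ∈ Set.Icc cmin cmax) →
        1 ≤ Multiset.card Z₁ → Multiset.card Z₁ ≤ N →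
        1 ≤ Multiset.card Z₂ → Multiset.card Z₂ ≤ N →
        (Z₁, xelse₁) ≠ (Z₂, xelse₂) →
        ((Z₁.map h).sum, xelse₁) ≠ ((Z₂.map h).sum, xelse₂) := by
  refine ⟨fun z i => z ^ (i : ℕ), ?_⟩
  intro Z₁ Z₂ xelse₁ xelse₂ _ _ h11 h1N h21 h2N hne heq
  apply hne
  obtain ⟨hsum, hx⟩ := Prod.mk.injEq .. ▸ heq
  -- coordinate-wise power sums
  have hpow : ∀ i : Fin (N + 1), (Z₁.map (· ^ (i : ℕ))).sum = (Z₂.map (· ^ (i : ℕ))).sum := by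
    intro i
    have h1 : ∀ (Z : Multiset ℝ),
        (Z.map (fun z (j : Fin (N+1)) => z ^ (j : ℕ))).sum i = (Z.map (· ^ (i : ℕ))).sum := by
      intro Z
      induction Z using Multiset.induction with
      | empty => simp
      | cons a s ih => simp [ih]
    rw [← h1 Z₁, ← h1 Z₂, congrFun hsum i]
  -- cards equal from i = 0
  have hcard : Multiset.card Z₁ = Multiset.card Z₂ := by
    have := hpow 0
    simpa [Multiset.map_const'] using this
  have hZ : Z₁ = Z₂ := by
    apply multiset_eq_of_psum_eq (Multiset.card Z₁) _ _ rfl hcard.symm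
    intro k hk1 hkM
    have hk : k < N + 1 := by omega
    have := hpow ⟨k, hk⟩
    simpa using this
  rw [hZ, hx]
end
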